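/- Let x ≠ y be points in a proper domain D of a Banach space and γ a λ-curve in Λ^λ_{xy}(D) with λ ∈ (0, 1/4]. Then for any distinct z₁, z₂ ∈ γ, the subarc γ[z₁, z₂] is a 2λ-curve, i.e., γ[z₁,z₂] ∈ Λ^{2λ}_{z₁z₂}(D). -/

import Mathlib

open Set ENNReal

variable {E : Type*} [NormedAddCommGroup E]

/-- Distance to the boundary (= distance to the complement, for open sets). -/
noncomputable def dD (D : Set E) (z : E) : ℝ := Metric.infDist z Dᶜ

/-- A continuous curve with image in `D`, parametrized on `[a,b]`. -/
structure CurveIn (D : Set E) (a b : ℝ) (γ : ℝ → E) : Prop where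
  le : a ≤ b
  cont : ContinuousOn γ (Set.Icc a b)
  mem : ∀ t ∈ Set.Icc a b, γ t ∈ D

/-- Arc length of `γ` on `[s,t]` (as a real number; finite iff rectifiable). -/
noncomputable def len (γ : ℝ → E) (s t : ℝ) : ℝ :=
  (eVariationOn γ (Set.Icc s t)).toReal

/-- Quasihyperbolic length of `γ` over a parameter set, defined as the supremum of
weighted Riemann sums `Σ |γ(t_{i+1}) - γ(t_i)| / d_D(γ(t_i))` over monotone sequences. -/
noncomputable def qhVar (D : Set E) (γ : ℝ → E) (s : Set ℝ) : ℝ≥0∞ :=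
  ⨆ p : ℕ × { u : ℕ → ℝ // Monotone u ∧ ∀ i, u i ∈ s },
    ∑ i ∈ Finset.range p.1,
      ENNReal.ofReal (dist (γ (p.2.1 (i + 1))) (γ (p.2.1 i)) / dD D (γ (p.2.1 i)))

/-- Quasihyperbolic distance: infimum of quasihyperbolic lengths of curves in `D`
joining `x` and `y`. -/
noncomputable def qhDist (D : Set E) (x y : E) : ℝ :=
  (⨅ q : { q : ℝ × ℝ × (ℝ → E) //
      CurveIn D q.1 q.2.1 q.2.2 ∧ q.2.2 q.1 = x ∧ q.2.2 q.2.1 = y },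
    qhVar D q.1.2.2 (Set.Icc q.1.1 q.1.2.1)).toReal

/-- Inner (intrinsic) distance in `D`: infimum of arc lengths of curves in `D`
joining `x` and `y`. -/
noncomputable def innerDist (D : Set E) (x y : E) : ℝ :=
  (⨅ q : { q : ℝ × ℝ × (ℝ → E) //
      CurveIn D q.1 q.2.1 q.2.2 ∧ q.2.2 q.1 = x ∧ q.2.2 q.2.1 = y },
    eVariationOn q.1.2.2 (Set.Icc q.1.1 q.1.2.1)).toReal

/-- A proper domain: open, connected, and not the whole space. -/
def IsProperDomain (D : Set E) : Prop := IsOpen D ∧ IsConnected D ∧ D ≠ Set.univ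

/-- `(D, k_D)` is δ-Gromov hyperbolic (Gromov product formulation). -/
def GromovHyp (D : Set E) (δ : ℝ) : Prop :=
  ∀ x ∈ D, ∀ y ∈ D, ∀ z ∈ D, ∀ p ∈ D,
    (qhDist D p x + qhDist D p z - qhDist D x z) / 2 ≥
      min ((qhDist D p x + qhDist D p y - qhDist D x y) / 2)
          ((qhDist D p y + qhDist D p z - qhDist D y z) / 2) - δ

/-- A `c`-quasigeodesic in `D`: `ℓ_k(γ[s,t]) ≤ c·k_D(γ s, γ t)` for all parameters. -/
def IsQuasigeodesic (D : Set E) (c : ℝ) (a b : ℝ) (γ : ℝ → E) : Prop :=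
  CurveIn D a b γ ∧
    ∀ s t, a ≤ s → s ≤ t → t ≤ b →
      qhVar D γ (Set.Icc s t) ≤ ENNReal.ofReal (c * qhDist D (γ s) (γ t))

/-- An `h`-short arc in `D`: `ℓ_k(γ[s,t]) ≤ k_D(γ s, γ t) + h` for all parameters. -/
def ShortArc (D : Set E) (h : ℝ) (a b : ℝ) (γ : ℝ → E) : Prop :=
  CurveIn D a b γ ∧
    ∀ s t, a ≤ s → s ≤ t → t ≤ b →
      qhVar D γ (Set.Icc s t) ≤ ENNReal.ofReal (qhDist D (γ s) (γ t) + h)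

/-- The coefficient `c^λ_{x,y} = min{1 + λ/(2 k_D(x,y)), 9/8}`. -/
noncomputable def lamCoef (D : Set E) (lam : ℝ) (x y : E) : ℝ :=
  min (1 + lam / (2 * qhDist D x y)) (9 / 8)

/-- A λ-curve: a `c^λ_{x,y}`-quasigeodesic with endpoints `x = γ a`, `y = γ b`. -/
def IsLambdaCurve (D : Set E) (lam : ℝ) (a b : ℝ) (γ : ℝ → E) : Prop :=
  CurveIn D a b γ ∧
    ∀ s t, a ≤ s → s ≤ t → t ≤ b →
      qhVar D γ (Set.Icc s t) ≤
        ENNReal.ofReal (lamCoef D lam (γ a) (γ b) * qhDist D (γ s) (γ t))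

/-- A `c`-cone arc (John curve): double cone condition with constant `c`. -/
def ConeArc (D : Set E) (c : ℝ) (a b : ℝ) (γ : ℝ → E) : Prop :=
  ∀ t ∈ Set.Icc a b, min (len γ a t) (len γ t b) ≤ c * dD D (γ t)

/-- A `c`-John domain. -/
def IsJohnDomain (D : Set E) (c : ℝ) : Prop :=
  ∀ x ∈ D, ∀ y ∈ D, ∃ a b γ, CurveIn D a b γ ∧
    eVariationOn γ (Set.Icc a b) ≠ ⊤ ∧ γ a = x ∧ γ b = y ∧ ConeArc D c a b γ

/-- A `c`-uniform arc: cone condition plus `ℓ(γ) ≤ c·|γ a − γ b|`. -/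
def IsUniformArc (D : Set E) (c : ℝ) (a b : ℝ) (γ : ℝ → E) : Prop :=
  CurveIn D a b γ ∧ ConeArc D c a b γ ∧ len γ a b ≤ c * ‖γ a - γ b‖

/-- A `c`-inner uniform arc: cone condition plus the Gehring–Hayman inequality
`ℓ(γ) ≤ c·σ_D(γ a, γ b)`. -/
def IsInnerUniformArc (D : Set E) (c : ℝ) (a b : ℝ) (γ : ℝ → E) : Prop :=
  CurveIn D a b γ ∧ ConeArc D c a b γ ∧ len γ a b ≤ c * innerDist D (γ a) (γ b)

/-- A `c`-inner uniform domain. -/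
def IsInnerUniform (D : Set E) (c : ℝ) : Prop :=
  ∀ x ∈ D, ∀ y ∈ D, ∃ a b γ, γ a = x ∧ γ b = y ∧ IsInnerUniformArc D c a b γ

lemma qhVar_mono (D : Set E) (γ : ℝ → E) {s t : Set ℝ} (h : s ⊆ t) :
    qhVar D γ s ≤ qhVar D γ t := by
  refine iSup_le fun p => ?_
  obtain ⟨n, u, hmono, hmem⟩ := p
  exact le_iSup (fun p : ℕ × { u : ℕ → ℝ // Monotone u ∧ ∀ i, u i ∈ t } =>
      ∑ i ∈ Finset.range p.1,
        ENNReal.ofReal (dist (γ (p.2.1 (i + 1))) (γ (p.2.1 i)) / dD D (γ (p.2.1 i))))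
    ⟨n, u, hmono, fun i => h (hmem i)⟩

lemma qhDist_nonneg (D : Set E) (x y : E) : 0 ≤ qhDist D x y := ENNReal.toReal_nonneg

lemma qhDist_le_qhVar (D : Set E) {s t : ℝ} {γ : ℝ → E} (hc : CurveIn D s t γ)
    (hfin : qhVar D γ (Set.Icc s t) ≠ ⊤) :
    qhDist D (γ s) (γ t) ≤ (qhVar D γ (Set.Icc s t)).toReal := by
  apply ENNReal.toReal_mono hfin
  exact iInf_le (fun q : { q : ℝ × ℝ × (ℝ → E) //
      CurveIn D q.1 q.2.1 q.2.2 ∧ q.2.2 q.1 = γ s ∧ q.2.2 q.2.1 = γ t } =>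
      qhVar D q.1.2.2 (Set.Icc q.1.1 q.1.2.1)) ⟨(s, t, γ), hc, rfl, rfl⟩

theorem stmt8 {E : Type*} [NormedAddCommGroup E] [NormedSpace ℝ E] [CompleteSpace E]
    (D : Set E) (hD : IsProperDomain D) (lam : ℝ) (hlam : lam ∈ Set.Ioc 0 (1 / 4))
    (a b : ℝ) (γ : ℝ → E) (hne : γ a ≠ γ b)
    (hγ : IsLambdaCurve D lam a b γ)
    (s t : ℝ) (hs : a ≤ s) (hst : s ≤ t) (htb : t ≤ b) (hne' : γ s ≠ γ t) :
    IsLambdaCurve D (2 * lam) s t γ := by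
  obtain ⟨hC, hQ⟩ := hγ
  have hlam0 : 0 < lam := hlam.1
  have hsub : Set.Icc s t ⊆ Set.Icc a b := Set.Icc_subset_Icc hs htb
  have hCst : CurveIn D s t γ :=
    ⟨hst, hC.cont.mono hsub, fun x hx => hC.mem x (hsub hx)⟩
  refine ⟨hCst, fun u v hu huv hv => ?_⟩
  set kab := qhDist D (γ a) (γ b) with hkabdef
  set kst := qhDist D (γ s) (γ t) with hkstdef
  have hkab0 : 0 ≤ kab := qhDist_nonneg D _ _
  have hkst0 : 0 ≤ kst := qhDist_nonneg D _ _
  have hkuv0 : 0 ≤ qhDist D (γ u) (γ v) := qhDist_nonneg D _ _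
  have hcoef_le : lamCoef D lam (γ a) (γ b) ≤ 9 / 8 := min_le_right _ _
  have hcoef_nonneg : 0 ≤ lamCoef D lam (γ a) (γ b) := by
    refine le_min ?_ (by norm_num)
    have : 0 ≤ lam / (2 * kab) := div_nonneg hlam0.le (by linarith)
    linarith
  have hvar_st := hQ s t hs hst htb
  have hvar_ab := hQ a b le_rfl hC.le le_rfl
  have hvar_uv := hQ u v (hs.trans hu) huv (hv.trans htb)
  have hfin_st : qhVar D γ (Set.Icc s t) ≠ ⊤ :=
    (hvar_st.trans_lt ENNReal.ofReal_lt_top).ne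
  rcases eq_or_lt_of_le hkst0 with hkst | hkst
  · -- degenerate case: k_st = 0, the subarc has zero qh-length
    have h0 : qhVar D γ (Set.Icc s t) = 0 := by
      have := hvar_st
      rw [← hkstdef] at this
      rw [← hkst] at this
      simpa using this
    calc qhVar D γ (Set.Icc u v) ≤ qhVar D γ (Set.Icc s t) :=
          qhVar_mono D γ (Set.Icc_subset_Icc hu hv)
      _ = 0 := h0
      _ ≤ _ := zero_le
  · -- main case: k_st > 0
    have hkst_le : kst ≤ lamCoef D lam (γ a) (γ b) * kab := by
      refine (qhDist_le_qhVar D hCst hfin_st).trans ?_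
      calc (qhVar D γ (Set.Icc s t)).toReal
          ≤ (ENNReal.ofReal (lamCoef D lam (γ a) (γ b) * kab)).toReal :=
            ENNReal.toReal_mono ENNReal.ofReal_ne_top
              ((qhVar_mono D γ hsub).trans hvar_ab)
        _ = lamCoef D lam (γ a) (γ b) * kab :=
            ENNReal.toReal_ofReal (mul_nonneg hcoef_nonneg hkab0)
    have hcoef : lamCoef D lam (γ a) (γ b) ≤ lamCoef D (2 * lam) (γ s) (γ t) := by
      have h1 : (1 : ℝ) ≤ 1 + 2 * lam / (2 * kst) := by
        have : 0 ≤ 2 * lam / (2 * kst) := div_nonneg (by linarith) (by linarith)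
        linarith
      rcases eq_or_lt_of_le hkab0 with hkab | hkab
      · -- k_ab = 0 : coefficient is min (1+lam/0) (9/8) = 1
        have : lamCoef D lam (γ a) (γ b) = 1 := by
          rw [lamCoef, ← hkabdef, ← hkab]
          norm_num
        rw [this]
        exact le_min h1 (by norm_num)
      · -- k_ab > 0 : use k_st ≤ (9/8) k_ab ≤ 2 k_ab
        have hkst2 : kst ≤ 2 * kab := by
          have h98 : lamCoef D lam (γ a) (γ b) * kab ≤ (9 / 8) * kab :=
            mul_le_mul_of_nonneg_right hcoef_le hkab0
          nlinarith
        refine min_le_min ?_ le_rfl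
        have hdiv : lam / (2 * kab) ≤ 2 * lam / (2 * kst) := by
          rw [div_le_div_iff₀ (by linarith) (by linarith)]
          nlinarith
        linarith
    refine hvar_uv.trans (ENNReal.ofReal_le_ofReal ?_)
    exact mul_le_mul_of_nonneg_right hcoef hkuv0
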